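/- Let Δ ≥ 4 be an integer, let t = ⌊(Δ+3)/2⌋, and let T be a tree on n vertices with Δ dividing n. Assume every vertex of T has degree either in {1,2,…,t} or equal to Δ, and that no edge of T joins two vertices of degree Δ. Then the number of edges of T both of whose endpoints have degree at most t is at least Δ−1. -/
import Mathlib

open Finset

open scoped Classical in
/-- If `Δ ∣ n`, every vertex of the tree `T` has degree in `{1,…,t}` or equal
to `Δ` (where `t = ⌊(Δ+3)/2⌋`), and no edge joins two `Δ`-vertices, then at
least `Δ−1` edges have both endpoints of degree at most `t`. -/
theorem low_degree_edges_ge {V : Type*} [Fintype V]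
    (G : SimpleGraph V) (hT : G.IsTree)
    (Δ : ℕ) (hΔ : 4 ≤ Δ) (hdvd : Δ ∣ Fintype.card V)
    (hdeg : ∀ v, (1 ≤ G.degree v ∧ G.degree v ≤ (Δ + 3) / 2) ∨ G.degree v = Δ)
    (hnoDD : ∀ u v, G.Adj u v → ¬(G.degree u = Δ ∧ G.degree v = Δ)) :
    Δ - 1 ≤
      (G.edgeFinset.filter
        (fun e => ∀ v ∈ e, G.degree v ≤ (Δ + 3) / 2)).card := by
  classical
  set t := (Δ + 3) / 2 with ht
  have hle : ∀ v, G.degree v ≤ t ↔ G.degree v ≠ Δ := by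
    intro v; rcases hdeg v with ⟨h1, h2⟩ | h <;> constructor <;> intro <;> omega
  set D : Finset V := univ.filter (fun v => G.degree v = Δ) with hD
  set H := G.edgeFinset.filter (fun e => ¬ ∀ v ∈ e, G.degree v ≤ t) with hH
  set L := G.edgeFinset.filter (fun e => ∀ v ∈ e, G.degree v ≤ t) with hL
  -- H is the union of incidence sets of Δ-vertices
  have hHb : H = D.biUnion (fun v => G.incidenceFinset v) := by
    ext e
    simp only [hH, hD, mem_filter, mem_biUnion, mem_univ, true_and,
      SimpleGraph.incidenceFinset_eq_filter, not_forall]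
    constructor
    · rintro ⟨he, v, hv, hd⟩
      exact ⟨v, (hle v).not_left.1 (by simpa using hd), he, hv⟩
    · rintro ⟨v, hd, he, hv⟩
      exact ⟨he, v, hv, by rw [hle v]; exact fun h => h hd⟩
  -- the incidence sets of distinct Δ-vertices are disjoint
  have hdisj : (D : Set V).Pairwise fun u v =>
      Disjoint (G.incidenceFinset u) (G.incidenceFinset v) := by
    intro u hu v hv huv
    rw [Finset.disjoint_left]
    intro e heu hev
    rw [SimpleGraph.mem_incidenceFinset] at heu hev
    have hadj := G.adj_of_mem_incidenceSet huv heu hev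
    simp only [hD, mem_coe, mem_filter] at hu hv
    exact hnoDD u v hadj ⟨hu.2, hv.2⟩
  have hHcard : H.card = D.card * Δ := by
    rw [hHb, Finset.card_biUnion hdisj]
    have : ∀ v ∈ D, (G.incidenceFinset v).card = Δ := by
      intro v hv
      rw [G.card_incidenceFinset_eq_degree]
      exact (mem_filter.1 hv).2
    rw [Finset.sum_congr rfl this, Finset.sum_const, smul_eq_mul]
  have hsplit : L.card + H.card = G.edgeFinset.card :=
    Finset.card_filter_add_card_filter_not _
  have hedges : G.edgeFinset.card + 1 = Fintype.card V := hT.card_edgeFinset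
  obtain ⟨m, hm⟩ := hdvd
  rw [Nat.mul_comm] at hm
  have h1 : D.card * Δ < m * Δ := by omega
  have h2 : D.card < m := Nat.lt_of_mul_lt_mul_right h1
  have h3 : (D.card + 1) * Δ ≤ m * Δ := Nat.mul_le_mul_right Δ h2
  rw [Nat.add_mul, Nat.one_mul] at h3
  omega
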